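/- arXiv:2111.01002 — 2 statements merged into one kernel-verified Lean document; each statement's English description precedes it below -/
import Mathlib

section
/- Let n ≥ 1 be an integer and let L : ℝ^n → ℝ be a linear map. If there is a unique point z ∈ F_n^+ with L(z) = min{L(x) : x ∈ F_n^+}, then z is the unique point of V_n^+(ℝ) satisfying L(z) = min{L(x) : x ∈ V_n^+(ℝ)}; that is, L(z) < L(x) for every x ∈ V_n^+(ℝ) with x ≠ z. -/
/-- The vector y_n(k,ℓ) ∈ ℝ^n (1-indexed), with y_k = (-1)^{ℓ-k+1} f_{n-ℓ}/f_{ℓ-k},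
y_ℓ = f_{n-k}/f_{ℓ-k}, and y_i = 0 otherwise. -/
noncomputable def yVec (n k l : ℕ) : Fin n → ℝ := fun i =>
  if (i : ℕ) + 1 = k then (-1 : ℝ) ^ (l - k + 1) * (Nat.fib (n - l) : ℝ) / (Nat.fib (l - k) : ℝ)
  else if (i : ℕ) + 1 = l then (Nat.fib (n - k) : ℝ) / (Nat.fib (l - k) : ℝ)
  else 0

/-- The 2×n matrix A_n whose first row is (f_1, …, f_n) and second row is (f_0, …, f_{n-1}). -/
noncomputable def Amat (n : ℕ) : Matrix (Fin 2) (Fin n) ℝ :=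
  Matrix.of fun r j => if r = 0 then (Nat.fib ((j : ℕ) + 1) : ℝ) else (Nat.fib (j : ℕ) : ℝ)

/-- V_n^+(ℝ): the set of x ∈ ℝ^n with A_n x = (f_n, f_{n-1})^T and all entries nonnegative. -/
def Vplus (n : ℕ) : Set (Fin n → ℝ) :=
  {x | (Amat n).mulVec x = ![(Nat.fib n : ℝ), (Nat.fib (n - 1) : ℝ)] ∧ ∀ i, 0 ≤ x i}

/-- F_n^+ = {y_n(k,ℓ) : 1 ≤ k < ℓ ≤ n with ℓ − k odd}. -/
def FplusSet (n : ℕ) : Set (Fin n → ℝ) :=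
  {v | ∃ k l : ℕ, 1 ≤ k ∧ k < l ∧ l ≤ n ∧ Odd (l - k) ∧ v = yVec n k l}

/-- V_n^+(ℤ): elements of V_n^+(ℝ) with all entries integers. -/
def VplusZ (n : ℕ) : Set (Fin n → ℝ) :=
  {x | x ∈ Vplus n ∧ ∀ i, ∃ m : ℤ, x i = (m : ℝ)}

open Nat in
lemma fibR_doc (m j : ℕ) :
    (Nat.fib (m + j) : ℝ) * Nat.fib (j + 1) - Nat.fib (m + j + 1) * Nat.fib j
      = (-1) ^ j * Nat.fib m := by
  induction j with
  | zero => simp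
  | succ j ih =>
      have h1 : m + (j+1) = (m + j) + 1 := by ring
      have h2 : (m + j) + 1 + 1 = m + j + 2 := rfl
      rw [h1]
      rw [show (j+1)+1 = j+2 from rfl]
      rw [Nat.fib_add_two (n := j), Nat.fib_add_two (n := m + j)]
      push_cast
      push_cast at ih
      linear_combination (-1 : ℝ) * ih

lemma doc' (k l : ℕ) (hk : 1 ≤ k) (hkl : k ≤ l) :
    (Nat.fib (l-1) : ℝ) * Nat.fib k - Nat.fib l * Nat.fib (k-1)
      = (-1) ^ (k-1) * Nat.fib (l-k) := by
  have h := fibR_doc (l - k) (k - 1)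
  rw [show l - k + (k-1) = l - 1 by omega, show (k-1)+1 = k by omega,
    show l - 1 + 1 = l by omega] at h
  exact h

lemma detcols_ne (a b : ℕ) (h : a ≠ b) :
    (Nat.fib (a+1) : ℝ) * Nat.fib b - Nat.fib a * Nat.fib (b+1) ≠ 0 := by
  have key : ∀ a b : ℕ, a < b → (Nat.fib (a+1) : ℝ) * Nat.fib b - Nat.fib a * Nat.fib (b+1) ≠ 0 := by
    intro a b hab
    have h := doc' (a+1) (b+1) (by omega) (by omega)
    rw [show a+1-1 = a by omega, show b+1-1 = b by omega, show b+1-(a+1) = b - a by omega] at h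
    rw [show (Nat.fib (a+1) : ℝ) * Nat.fib b - Nat.fib a * Nat.fib (b+1)
      = (Nat.fib b : ℝ) * Nat.fib (a+1) - Nat.fib (b+1) * Nat.fib a by ring, h]
    have : 0 < Nat.fib (b - a) := Nat.fib_pos.mpr (by omega)
    have h2 : (0:ℝ) < Nat.fib (b-a) := by exact_mod_cast this
    rcases Nat.even_or_odd a with he | ho
    · rw [he.neg_one_pow]; positivity
    · rw [ho.neg_one_pow]; intro hc; nlinarith
  rcases lt_or_gt_of_ne h with hab | hba
  · exact key a b hab
  · intro hc
    exact key b a hba (by linarith)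

lemma yVec_eq_single (n k l : ℕ) (hk : 1 ≤ k) (hkl : k < l) (hln : l ≤ n) :
    yVec n k l = Pi.single (⟨k-1, by omega⟩ : Fin n)
        ((-1 : ℝ) ^ (l - k + 1) * (Nat.fib (n - l) : ℝ) / (Nat.fib (l - k) : ℝ))
      + Pi.single (⟨l-1, by omega⟩ : Fin n) ((Nat.fib (n - k) : ℝ) / (Nat.fib (l - k) : ℝ)) := by
  funext i
  have h1 : (i = (⟨k-1, by omega⟩ : Fin n)) ↔ (i:ℕ)+1 = k := by
    rw [Fin.ext_iff]; simp; omega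
  have h2 : (i = (⟨l-1, by omega⟩ : Fin n)) ↔ (i:ℕ)+1 = l := by
    rw [Fin.ext_iff]; simp; omega
  simp only [yVec, Pi.add_apply, Pi.single_apply, h1, h2]
  by_cases hc1 : (i:ℕ)+1 = k
  · rw [if_pos hc1, if_pos hc1, if_neg (by omega)]; ring
  · rw [if_neg hc1, if_neg hc1]
    by_cases hc2 : (i:ℕ)+1 = l
    · rw [if_pos hc2]; ring
    · rw [if_neg hc2]; ring

lemma yVec_mem (n k l : ℕ) (hk : 1 ≤ k) (hkl : k < l) (hln : l ≤ n) (hodd : Odd (l - k)) :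
    yVec n k l ∈ Vplus n := by
  have hFpos : (0:ℝ) < Nat.fib (l - k) := by
    exact_mod_cast Nat.fib_pos.mpr (by omega)
  have hF : (Nat.fib (l-k) : ℝ) ≠ 0 := ne_of_gt hFpos
  have heven : (-1 : ℝ) ^ (l - k + 1) = 1 := (by simpa using hodd.add_one : Even (l-k+1)).neg_one_pow
  -- identities
  set p : ℝ := (-1) ^ (k-1) with hp_def
  have hp : p * p = 1 := by rw [hp_def, ← pow_add]; exact Even.neg_one_pow ⟨k-1, by ring⟩
  have hqp : ((-1:ℝ)) ^ (l-1) = -p := by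
    rw [hp_def, show l - 1 = (l-k) + (k-1) by omega, pow_add, hodd.neg_one_pow]; ring
  have I1 := doc' k l hk (le_of_lt hkl)
  have I2 := doc' l n (by omega) hln
  have I3 := doc' k n hk (by omega)
  rw [hqp] at I2
  rw [← hp_def] at I1 I3
  set a : ℝ := ((Nat.fib k : ℝ) : ℝ)
  set b : ℝ := ((Nat.fib l : ℝ) : ℝ)
  set c : ℝ := ((Nat.fib (k-1) : ℝ) : ℝ)
  set d : ℝ := ((Nat.fib (l-1) : ℝ) : ℝ)
  set e : ℝ := ((Nat.fib n : ℝ) : ℝ)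
  set f : ℝ := ((Nat.fib (n-1) : ℝ) : ℝ)
  set X : ℝ := ((Nat.fib (n-l) : ℝ) : ℝ)
  set Y : ℝ := ((Nat.fib (n-k) : ℝ) : ℝ)
  set F : ℝ := ((Nat.fib (l-k) : ℝ) : ℝ)
  -- I1 : d * a - b * c = p * F ; I2 : f * b - e * d = -p * X ; I3 : f * a - e * c = p * Y
  have hX : X = p * (e * d - f * b) := by linear_combination p * I2 - X * hp
  have hY : Y = p * (f * a - e * c) := by linear_combination (-p) * I3 + (-Y) * hp
  have hFF : F = p * (d * a - b * c) := by linear_combination (-p) * I1 + (-F) * hp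
  have key1 : a * X + b * Y = e * F := by rw [hX, hY, hFF]; linear_combination (e*d*a - e*b*c - a*e*d + a*f*b - b*f*a + b*e*c) * hp
  have key2 : c * X + d * Y = f * F := by rw [hX, hY, hFF]; linear_combination (f*d*a - f*b*c - c*e*d + c*f*b - d*f*a + d*e*c) * hp
  constructor
  · rw [yVec_eq_single n k l hk hkl hln]
    rw [Matrix.mulVec_add, Matrix.mulVec_single, Matrix.mulVec_single]
    funext r
    fin_cases r
    · show Amat n 0 ⟨k-1, by omega⟩ * _ + Amat n 0 ⟨l-1, by omega⟩ * _ = _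
      simp only [Amat, Matrix.of_apply, if_pos rfl, Matrix.cons_val_zero, Pi.add_apply]
      rw [show k - 1 + 1 = k by omega, show l - 1 + 1 = l by omega, heven]
      show a * (1 * X / F) + b * (Y / F) = e
      field_simp
      linear_combination key1
    · show Amat n 1 ⟨k-1, by omega⟩ * _ + Amat n 1 ⟨l-1, by omega⟩ * _ = _
      simp only [Amat, Matrix.of_apply, Matrix.cons_val_one, Matrix.head_cons, Pi.add_apply]
      rw [if_neg (by decide), if_neg (by decide), heven]
      show c * (1 * X / F) + d * (Y / F) = f
      field_simp
      linear_combination key2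
  · intro i
    simp only [yVec]
    split_ifs with hc1 hc2
    · rw [heven]; positivity
    · positivity
    · exact le_refl _

lemma rows (n : ℕ) (x : Fin n → ℝ)
    (h : (Amat n).mulVec x = ![(Nat.fib n : ℝ), (Nat.fib (n - 1) : ℝ)]) :
    (∑ j : Fin n, (Nat.fib ((j:ℕ)+1) : ℝ) * x j = Nat.fib n)
    ∧ (∑ j : Fin n, (Nat.fib (j:ℕ) : ℝ) * x j = Nat.fib (n-1)) := by
  constructor
  · have := congrFun h 0
    simpa [Matrix.mulVec, dotProduct, Amat] using this
  · have := congrFun h 1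
    simpa [Matrix.mulVec, dotProduct, Amat] using this

lemma classify (n : ℕ) (hn : 2 ≤ n) (x : Fin n → ℝ) (hx : x ∈ Vplus n)
    (hsupp : ∀ i j t : Fin n, 0 < x i → 0 < x j → 0 < x t → i = j ∨ i = t ∨ t = j) :
    ∃ k l : ℕ, 1 ≤ k ∧ k < l ∧ l ≤ n ∧ Odd (l - k) ∧ x = yVec n k l := by
  obtain ⟨heq, hnn⟩ := hx
  obtain ⟨row0, row1⟩ := rows n x heq
  have hfibn : (0:ℝ) < Nat.fib n := by exact_mod_cast Nat.fib_pos.mpr (by omega)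
  by_cases h2 : ∃ i j : Fin n, (i:ℕ) < (j:ℕ) ∧ 0 < x i ∧ 0 < x j
  · -- two positive coordinates
    obtain ⟨i, j, hij, hxi, hxj⟩ := h2
    have hijne : i ≠ j := fun h => by rw [h] at hij; omega
    have hz : ∀ s : Fin n, s ≠ i → s ≠ j → x s = 0 := by
      intro s hsi hsj
      rcases eq_or_lt_of_le (hnn s) with h | h
      · exact h.symm
      · rcases hsupp i j s hxi hxj h with h' | h' | h'
        · exact absurd h' hijne
        · exact absurd h'.symm hsi
        · exact absurd h' hsj
    have eq1 : (Nat.fib ((i:ℕ)+1) : ℝ) * x i + (Nat.fib ((j:ℕ)+1) : ℝ) * x j = Nat.fib n := by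
      rw [← row0]
      exact (Finset.sum_eq_add_of_mem (f := fun s : Fin n => (Nat.fib ((s:ℕ)+1) : ℝ) * x s)
        i j (Finset.mem_univ i) (Finset.mem_univ j) hijne
        (fun s _ hs => by simp [hz s hs.1 hs.2])).symm
    have eq2 : (Nat.fib ((i:ℕ)) : ℝ) * x i + (Nat.fib ((j:ℕ)) : ℝ) * x j = Nat.fib (n-1) := by
      rw [← row1]
      exact (Finset.sum_eq_add_of_mem (f := fun s : Fin n => (Nat.fib ((s:ℕ)) : ℝ) * x s)
        i j (Finset.mem_univ i) (Finset.mem_univ j) hijne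
        (fun s _ hs => by simp [hz s hs.1 hs.2])).symm
    set k : ℕ := (i:ℕ)+1 with hk_def
    set l : ℕ := (j:ℕ)+1 with hl_def
    have hk1 : 1 ≤ k := by omega
    have hkl : k < l := by omega
    have hln : l ≤ n := by have := j.isLt; omega
    have I1 := doc' k l hk1 (le_of_lt hkl)
    have I2 := doc' l n (by omega) hln
    have I3 := doc' k n hk1 (by omega)
    rw [show k - 1 = (i:ℕ) by omega] at I1 I3
    rw [show l - 1 = (j:ℕ) by omega] at I1 I2
    set p : ℝ := (-1) ^ (i:ℕ) with hp_def
    set q : ℝ := (-1) ^ (j:ℕ) with hq_def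
    have hp : p * p = 1 := by rw [hp_def, ← pow_add]; exact Even.neg_one_pow ⟨(i:ℕ), by ring⟩
    set a : ℝ := ((Nat.fib k : ℝ) : ℝ)
    set b : ℝ := ((Nat.fib l : ℝ) : ℝ)
    set c : ℝ := ((Nat.fib (i:ℕ) : ℝ) : ℝ)
    set d : ℝ := ((Nat.fib (j:ℕ) : ℝ) : ℝ)
    have hFpos : (0:ℝ) < ((Nat.fib (l-k) : ℝ)) := by
      have h0 : 0 < Nat.fib (l - k) := Nat.fib_pos.mpr (by omega)
      exact_mod_cast h0
    have hXnn : (0:ℝ) ≤ ((Nat.fib (n-l) : ℝ)) := by positivity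
    set X : ℝ := ((Nat.fib (n-l) : ℝ) : ℝ)
    set Y : ℝ := ((Nat.fib (n-k) : ℝ) : ℝ)
    set F : ℝ := ((Nat.fib (l-k) : ℝ) : ℝ)
    -- I1 : d*a - b*c = p*F ; I2 : fib(n-1)*b - fib n*d = q*X ; I3 : fib(n-1)*a - fib n * c = p*Y
    have hF : F ≠ 0 := ne_of_gt hFpos
    have hXnn' : (0:ℝ) ≤ X := hXnn
    have hxjF : x j * F = Y := by
      have hxj' : x j * (p * F) = p * Y := by
        linear_combination a * eq2 - c * eq1 - x j * I1 + I3
      linear_combination p * hxj' + (Y - x j * F) * hp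
    have hxiF : x i * F = -(p*q*X) := by
      have hxi' : x i * (p * F) = -(q * X) := by
        linear_combination d * eq1 - b * eq2 - x i * I1 - I2
      linear_combination p * hxi' - x i * F * hp
    have hmod : ((i:ℕ) + (j:ℕ)) % 2 = (l - k) % 2 := by omega
    have hodd : Odd (l - k) := by
      by_contra hodd
      have h0 : (l - k) % 2 = 0 := Nat.even_iff.mp (Nat.not_odd_iff_even.mp hodd)
      have heven : Even ((i:ℕ) + (j:ℕ)) := Nat.even_iff.mpr (by omega)
      have hpq : p * q = 1 := by
        rw [hp_def, hq_def, ← pow_add]; exact heven.neg_one_pow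
      rw [hpq] at hxiF
      nlinarith
    have hpq : p * q = -1 := by
      rw [hp_def, hq_def, ← pow_add]
      refine Odd.neg_one_pow ?_
      rw [Nat.odd_iff]; rw [Nat.odd_iff] at hodd; omega
    have hxiF' : x i * F = X := by linear_combination hxiF - X * hpq
    have heven1 : (-1 : ℝ) ^ (l - k + 1) = 1 := by
      refine Even.neg_one_pow ?_
      rcases hodd with ⟨t, ht⟩; exact ⟨t+1, by omega⟩
    refine ⟨k, l, hk1, hkl, hln, hodd, funext fun s => ?_⟩
    simp only [yVec]
    by_cases hc1 : (s:ℕ)+1 = k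
    · have hsi : s = i := Fin.ext (by omega)
      rw [if_pos hc1, heven1, hsi, eq_comm, one_mul, div_eq_iff hF]
      linear_combination -hxiF'
    · rw [if_neg hc1]
      by_cases hc2 : (s:ℕ)+1 = l
      · have hsj : s = j := Fin.ext (by omega)
        rw [if_pos hc2, hsj, eq_comm, div_eq_iff hF]
        linear_combination -hxjF
      · rw [if_neg hc2]
        exact hz s (fun h => hc1 (by rw [h])) (fun h => hc2 (by rw [h]))
  · -- at most one positive coordinate
    push_neg at h2
    by_cases h1 : ∃ i : Fin n, 0 < x i
    · obtain ⟨i, hxi⟩ := h1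
      have hz : ∀ s : Fin n, s ≠ i → x s = 0 := by
        intro s hsi
        rcases eq_or_lt_of_le (hnn s) with h | h
        · exact h.symm
        · exfalso
          rcases Nat.lt_or_ge (s:ℕ) (i:ℕ) with hlt | hge
          · have := h2 s i hlt h
            linarith
          · have hgt : (i:ℕ) < (s:ℕ) := by
              rcases Nat.eq_or_lt_of_le hge with h' | h'
              · exact absurd (Fin.ext h'.symm : s = i) hsi
              · exact h'
            have := h2 i s hgt hxi
            linarith
    -- single coordinate i, equations
      have eq1 : (Nat.fib ((i:ℕ)+1) : ℝ) * x i = Nat.fib n := by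
        rw [← row0]
        exact (Finset.sum_eq_single_of_mem (f := fun s : Fin n => (Nat.fib ((s:ℕ)+1) : ℝ) * x s)
          i (Finset.mem_univ i)
          (fun s _ hs => by simp [hz s hs])).symm
      have eq2 : (Nat.fib ((i:ℕ)) : ℝ) * x i = Nat.fib (n-1) := by
        rw [← row1]
        exact (Finset.sum_eq_single_of_mem (f := fun s : Fin n => (Nat.fib ((s:ℕ)) : ℝ) * x s)
          i (Finset.mem_univ i)
          (fun s _ hs => by simp [hz s hs])).symm
      have hkn : (i:ℕ)+1 ≤ n := by have := i.isLt; omega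
      have I3 := doc' ((i:ℕ)+1) n (by omega) hkn
      rw [show (i:ℕ)+1 - 1 = (i:ℕ) by omega] at I3
      have hI3z : ((-1:ℝ)) ^ (i:ℕ) * (Nat.fib (n - ((i:ℕ)+1)) : ℝ) = 0 := by
        linear_combination (Nat.fib (i:ℕ) : ℝ) * eq1 - (Nat.fib ((i:ℕ)+1) : ℝ) * eq2 - I3
      have hfz : (Nat.fib (n-((i:ℕ)+1)) : ℝ) = 0 := by
        rcases Nat.even_or_odd (i:ℕ) with he | ho
        · rw [he.neg_one_pow, one_mul] at hI3z; exact hI3z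
        · rw [ho.neg_one_pow] at hI3z; linarith
      have hnk : n = (i:ℕ)+1 := by
        have h0 : Nat.fib (n - ((i:ℕ)+1)) = 0 := by exact_mod_cast hfz
        rw [Nat.fib_eq_zero] at h0
        omega
      have hxi1 : x i = 1 := by
        rw [← hnk] at eq1
        have := mul_left_cancel₀ (ne_of_gt hfibn)
          (by rw [eq1, mul_one] : (Nat.fib n : ℝ) * x i = (Nat.fib n : ℝ) * 1)
        exact this
      have hin : (i:ℕ) + 1 = n := hnk.symm
      refine ⟨n-1, n, by omega, by omega, le_refl n, by rw [show n - (n-1) = 1 by omega]; exact odd_one, funext fun s => ?_⟩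
      simp only [yVec]
      by_cases hc1 : (s:ℕ)+1 = n-1
      · rw [if_pos hc1, show n - n = 0 by omega]
        simp only [Nat.fib_zero, Nat.cast_zero, mul_zero, zero_div]
        refine hz s (fun h => ?_)
        rw [h] at hc1; omega
      · rw [if_neg hc1]
        by_cases hc2 : (s:ℕ)+1 = n
        · have hsi : s = i := Fin.ext (by omega)
          rw [if_pos hc2, hsi, hxi1, show n - (n-1) = 1 by omega]
          norm_num
        · rw [if_neg hc2]
          exact hz s (fun h => hc2 (by rw [h]; omega))
    · push_neg at h1
      exfalso
      have hz : ∀ s : Fin n, x s = 0 := fun s => le_antisymm (h1 s) (hnn s)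
      rw [Finset.sum_eq_zero (fun s _ => by rw [hz s]; ring)] at row0
      linarith

lemma convex_Vplus (n : ℕ) : Convex ℝ (Vplus n) := by
  intro u hu v hv s t hs ht hst
  refine ⟨?_, fun i => add_nonneg (mul_nonneg hs (hu.2 i)) (mul_nonneg ht (hv.2 i))⟩
  rw [Matrix.mulVec_add, Matrix.mulVec_smul, Matrix.mulVec_smul, hu.1, hv.1]
  funext r
  simp only [Pi.add_apply, Pi.smul_apply, smul_eq_mul]
  rw [← add_mul, hst, one_mul]

lemma isClosed_Vplus (n : ℕ) : IsClosed (Vplus n) := by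
  have h1 : IsClosed {x : Fin n → ℝ | (Amat n).mulVec x = ![(Nat.fib n : ℝ), (Nat.fib (n - 1) : ℝ)]} := by
    have hc : Continuous fun x : Fin n → ℝ => (Amat n).mulVec x := by
      have := LinearMap.continuous_of_finiteDimensional ((Amat n).mulVecLin)
      exact this
    exact isClosed_eq hc continuous_const
  have h2 : IsClosed {x : Fin n → ℝ | ∀ i, 0 ≤ x i} := by
    have : {x : Fin n → ℝ | ∀ i, 0 ≤ x i} = ⋂ i, {x | 0 ≤ x i} := by
      ext x; simp
    rw [this]
    exact isClosed_iInter fun i => isClosed_le continuous_const (continuous_apply i)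
  exact (Set.setOf_and ▸ h1.inter h2 : _)

lemma bound_Vplus (n : ℕ) {x : Fin n → ℝ} (hx : x ∈ Vplus n) (i : Fin n) :
    x i ≤ Nat.fib n := by
  have row0 : ∑ j : Fin n, (Nat.fib ((j:ℕ)+1) : ℝ) * x j = Nat.fib n := by
    have := congrFun hx.1 0
    simpa [Matrix.mulVec, dotProduct, Amat] using this
  have h1 : (Nat.fib ((i:ℕ)+1) : ℝ) * x i ≤ ∑ j : Fin n, (Nat.fib ((j:ℕ)+1) : ℝ) * x j :=
    Finset.single_le_sum (f := fun j : Fin n => (Nat.fib ((j:ℕ)+1) : ℝ) * x j)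
      (fun j _ => mul_nonneg (by positivity) (hx.2 j)) (Finset.mem_univ i)
  have h2 : (1:ℝ) ≤ (Nat.fib ((i:ℕ)+1) : ℝ) := by
    exact_mod_cast Nat.fib_pos.mpr (by omega)
  nlinarith [hx.2 i]

lemma isCompact_Vplus (n : ℕ) : IsCompact (Vplus n) := by
  refine Metric.isCompact_of_isClosed_isBounded (isClosed_Vplus n) ?_
  refine (Metric.isBounded_closedBall (x := (0 : Fin n → ℝ)) (r := Nat.fib n)).subset ?_
  intro x hx
  rw [Metric.mem_closedBall, dist_eq_norm, sub_zero]
  refine (pi_norm_le_iff_of_nonneg (by positivity)).mpr fun i => ?_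
  rw [Real.norm_eq_abs, abs_le]
  constructor
  · linarith [hx.2 i]
  · exact bound_Vplus n hx i

lemma eps_aux {a c ε : ℝ} (ha : 0 < a) (hε : 0 < ε) (h : ε ≤ a/(|c|+1)) :
    0 ≤ a + ε*c ∧ 0 ≤ a - ε*c := by
  have h1 : ε * (|c|+1) ≤ a := (le_div_iff₀ (by positivity)).mp h
  have h2 : |ε * c| ≤ a := by
    rw [abs_mul, abs_of_pos hε]; nlinarith [abs_nonneg c]
  constructor <;> nlinarith [le_abs_self (ε*c), neg_abs_le (ε*c)]

lemma extreme_two (n : ℕ) (M : Set (Fin n → ℝ)) (hMV : M ⊆ Vplus n)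
    (hmid : ∀ x ∈ M, ∀ u ∈ Vplus n, ∀ v ∈ Vplus n, u + v = x + x → u ∈ M ∧ v ∈ M)
    (x : Fin n → ℝ) (hx : x ∈ Set.extremePoints ℝ M)
    (i j t : Fin n) (hi : 0 < x i) (hj : 0 < x j) (ht : 0 < x t) :
    i = j ∨ i = t ∨ t = j := by
  by_contra hcon
  push_neg at hcon
  obtain ⟨hij, hit, htj⟩ := hcon
  have hij' : (i:ℕ) ≠ (j:ℕ) := fun h => hij (Fin.ext h)
  set D1 : ℝ := (Nat.fib (↑j+1):ℝ) * Nat.fib ↑t - Nat.fib ↑j * Nat.fib (↑t+1) with hD1_def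
  set D2 : ℝ := -((Nat.fib (↑i+1):ℝ) * Nat.fib ↑t - Nat.fib ↑i * Nat.fib (↑t+1)) with hD2_def
  set D3 : ℝ := (Nat.fib (↑i+1):ℝ) * Nat.fib ↑j - Nat.fib ↑i * Nat.fib (↑j+1) with hD3_def
  have hD3 : D3 ≠ 0 := detcols_ne ↑i ↑j hij'
  set d : Fin n → ℝ := Pi.single i D1 + Pi.single j D2 + Pi.single t D3 with hd_def
  have hdi : d i = D1 := by
    simp [hd_def, Pi.single_apply, Ne.symm hij, Ne.symm hit]
  have hdj : d j = D2 := by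
    simp [hd_def, Pi.single_apply, hij, htj]
  have hdt : d t = D3 := by
    simp [hd_def, Pi.single_apply, hit, Ne.symm htj]
  have hds : ∀ s : Fin n, s ≠ i → s ≠ j → s ≠ t → d s = 0 := by
    intro s h1 h2 h3
    simp [hd_def, Pi.single_apply, h1, h2, h3]
  have hA0 : ∀ s : Fin n, Amat n 0 s = (Nat.fib ((s:ℕ)+1) : ℝ) := fun s => by
    norm_num [Amat]
  have hA1 : ∀ s : Fin n, Amat n 1 s = (Nat.fib ((s:ℕ)) : ℝ) := fun s => by
    simp only [Amat, Matrix.of_apply, if_neg (by decide : ¬(1 : Fin 2) = 0)]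
  have hAd : (Amat n).mulVec d = 0 := by
    rw [hd_def, Matrix.mulVec_add, Matrix.mulVec_add, Matrix.mulVec_single,
      Matrix.mulVec_single, Matrix.mulVec_single]
    funext r
    fin_cases r
    · show Amat n 0 i * D1 + Amat n 0 j * D2 + Amat n 0 t * D3 = 0
      rw [hA0 i, hA0 j, hA0 t, hD1_def, hD2_def, hD3_def]; ring
    · show Amat n 1 i * D1 + Amat n 1 j * D2 + Amat n 1 t * D3 = 0
      rw [hA1 i, hA1 j, hA1 t, hD1_def, hD2_def, hD3_def]; ring
  set ε : ℝ := min (min (x i / (|D1|+1)) (x j / (|D2|+1))) (x t / (|D3|+1)) with hε_def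
  have hε : 0 < ε := lt_min (lt_min (by positivity) (by positivity)) (by positivity)
  have hεi : ε ≤ x i / (|D1|+1) := le_trans (min_le_left _ _) (min_le_left _ _)
  have hεj : ε ≤ x j / (|D2|+1) := le_trans (min_le_left _ _) (min_le_right _ _)
  have hεt : ε ≤ x t / (|D3|+1) := min_le_right _ _
  have hxV := hMV hx.1
  have hnn : ∀ s : Fin n, (0 ≤ x s + ε * d s) ∧ (0 ≤ x s - ε * d s) := by
    intro s
    by_cases h1 : s = i
    · rw [h1, hdi]; exact eps_aux hi hε hεi
    by_cases h2 : s = j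
    · rw [h2, hdj]; exact eps_aux hj hε hεj
    by_cases h3 : s = t
    · rw [h3, hdt]; exact eps_aux ht hε hεt
    rw [hds s h1 h2 h3]
    exact ⟨by simpa using hxV.2 s, by simpa using hxV.2 s⟩
  have hu : x + ε • d ∈ Vplus n := by
    constructor
    · rw [Matrix.mulVec_add, Matrix.mulVec_smul, hAd, smul_zero, add_zero, hxV.1]
    · intro s
      simpa using (hnn s).1
  have hv : x - ε • d ∈ Vplus n := by
    constructor
    · rw [Matrix.mulVec_sub, Matrix.mulVec_smul, hAd, smul_zero, sub_zero, hxV.1]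
    · intro s
      simpa using (hnn s).2
  obtain ⟨huM, hvM⟩ := hmid x hx.1 (x + ε • d) hu (x - ε • d) hv (by
    funext s
    simp only [Pi.add_apply, Pi.sub_apply, Pi.smul_apply, smul_eq_mul]
    ring)
  have hseg : x ∈ openSegment ℝ (x + ε • d) (x - ε • d) := by
    refine ⟨1/2, 1/2, by norm_num, by norm_num, by norm_num, ?_⟩
    funext s
    simp only [Pi.add_apply, Pi.sub_apply, Pi.smul_apply, smul_eq_mul]
    ring
  have heq := hx.2 huM hvM hseg
  have : x t + ε * D3 = x t := by
    have := congrFun heq t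
    simpa [hdt] using this
  have : ε * D3 = 0 := by linarith
  rcases mul_eq_zero.mp this with h | h
  · exact absurd h (ne_of_gt hε)
  · exact hD3 h

/-- Let n ≥ 1 and L : ℝ^n → ℝ linear. If there is a unique point z ∈ F_n^+
with L(z) = min{L(x) : x ∈ F_n^+}, then z is the unique point of V_n^+(ℝ) attaining the
minimum of L over V_n^+(ℝ); that is, L(z) < L(x) for every x ∈ V_n^+(ℝ) with x ≠ z. -/
theorem stmt6 (n : ℕ) (hn : 1 ≤ n) (L : (Fin n → ℝ) →ₗ[ℝ] ℝ) (z : Fin n → ℝ)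
    (hzF : z ∈ FplusSet n) (hmin : ∀ x ∈ FplusSet n, L z ≤ L x)
    (huniq : ∀ w ∈ FplusSet n, (∀ x ∈ FplusSet n, L w ≤ L x) → w = z) :
    z ∈ Vplus n ∧ (∀ x ∈ Vplus n, L z ≤ L x) ∧ ∀ x ∈ Vplus n, x ≠ z → L z < L x := by
  obtain ⟨k0, l0, hk0, hkl0, hl0n, hodd0, hz_eq⟩ := hzF
  have hn2 : 2 ≤ n := by omega
  have hzV : z ∈ Vplus n := by rw [hz_eq]; exact yVec_mem n k0 l0 hk0 hkl0 hl0n hodd0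
  have hLcont : Continuous L := L.continuous_of_finiteDimensional
  have hextF : ∀ w ∈ Set.extremePoints ℝ (Vplus n), w ∈ FplusSet n := by
    intro w hw
    exact classify n hn2 w hw.1
      (fun i j t hi hj ht => extreme_two n (Vplus n) (fun _ h => h)
        (fun x _ u hu v hv _ => ⟨hu, hv⟩) w hw i j t hi hj ht)
  have hKM := closure_convexHull_extremePoints (isCompact_Vplus n) (convex_Vplus n)
  have hmin2 : ∀ x ∈ Vplus n, L z ≤ L x := by
    intro x hxV
    have hxcl : x ∈ closure (convexHull ℝ (Set.extremePoints ℝ (Vplus n))) := by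
      rw [hKM]; exact hxV
    have hC : Convex ℝ {w : Fin n → ℝ | L z ≤ L w} := convex_halfSpace_ge L.isLinear (L z)
    have hCc : IsClosed {w : Fin n → ℝ | L z ≤ L w} := isClosed_le continuous_const hLcont
    exact closure_minimal
      (convexHull_min (fun w hw => hmin w (hextF w hw)) hC) hCc hxcl
  refine ⟨hzV, hmin2, ?_⟩
  intro x hxV hxz
  by_contra hlt
  push_neg at hlt
  have hLx : L x = L z := le_antisymm hlt (hmin2 x hxV)
  set Mset : Set (Fin n → ℝ) := Vplus n ∩ {w | L w = L z} with hM_def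
  have hMsub : Mset ⊆ Vplus n := Set.inter_subset_left
  have hMconv : Convex ℝ Mset := (convex_Vplus n).inter (convex_hyperplane L.isLinear (L z))
  have hMcomp : IsCompact Mset :=
    (isCompact_Vplus n).inter_right (isClosed_eq hLcont continuous_const)
  have hmid : ∀ y ∈ Mset, ∀ u ∈ Vplus n, ∀ v ∈ Vplus n, u + v = y + y → u ∈ Mset ∧ v ∈ Mset := by
    intro y hy u hu v hv huv
    have hsum : L u + L v = L z + L z := by
      have h1 : L (u + v) = L (y + y) := by rw [huv]
      rw [map_add, map_add, hy.2] at h1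
      exact h1
    have h1 := hmin2 u hu
    have h2 := hmin2 v hv
    exact ⟨⟨hu, by show L u = L z; linarith⟩,
           ⟨hv, by show L v = L z; linarith⟩⟩
  have hextM : Set.extremePoints ℝ Mset ⊆ {z} := by
    intro w hw
    have hwF : w ∈ FplusSet n := classify n hn2 w (hMsub hw.1)
      (fun i j t hi hj ht => extreme_two n Mset hMsub hmid w hw i j t hi hj ht)
    have hwmin : ∀ y ∈ FplusSet n, L w ≤ L y := by
      intro y hyF
      have : L w = L z := hw.1.2
      rw [this]
      exact hmin y hyF
    exact huniq w hwF hwmin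
  have hKM2 := closure_convexHull_extremePoints hMcomp hMconv
  have hxM : x ∈ Mset := ⟨hxV, hLx⟩
  have hxcl : x ∈ closure (convexHull ℝ (Set.extremePoints ℝ Mset)) := by
    rw [hKM2]; exact hxM
  have hsub : closure (convexHull ℝ (Set.extremePoints ℝ Mset)) ⊆ {z} := by
    have h1 : convexHull ℝ (Set.extremePoints ℝ Mset) ⊆ convexHull ℝ {z} :=
      convexHull_mono hextM
    rw [convexHull_singleton] at h1
    exact closure_minimal h1 isClosed_singleton
  exact hxz (hsub hxcl)
end

section
/- For every integer n ≥ 3, the cardinality of F_n^+ equals (n² − 2n + 5)/4 if n is odd and (n² − 2n + 4)/4 if n is even. -/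

lemma sum_halves (m : ℕ) : 4 * (∑ l ∈ Finset.Ioc 0 m, l / 2) + m % 2 = m ^ 2 := by
  induction m with
  | zero => simp
  | succ m ih =>
    rw [Finset.sum_Ioc_succ_top (Nat.zero_le _)]
    have h : (m + 1) ^ 2 = m ^ 2 + 2 * m + 1 := by ring
    omega

lemma fiber_eq (m l : ℕ) (hl : 0 < l) (hlm : l ≤ m) :
    (((Finset.Ioc 0 m ×ˢ Finset.Ioc 0 m).filter
        (fun p : ℕ × ℕ => p.1 < p.2 ∧ Odd (p.2 - p.1))).filter (fun p => p.2 = l)).card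
      = l / 2 := by
  have : (((Finset.Ioc 0 m ×ˢ Finset.Ioc 0 m).filter
        (fun p : ℕ × ℕ => p.1 < p.2 ∧ Odd (p.2 - p.1))).filter (fun p => p.2 = l))
      = (Finset.range (l / 2)).image (fun j => (l - 2 * j - 1, l)) := by
    ext ⟨k, l'⟩
    simp only [Finset.mem_filter, Finset.mem_product, Finset.mem_Ioc, Finset.mem_image,
      Finset.mem_range, Nat.odd_iff, Prod.mk.injEq]
    constructor
    · rintro ⟨⟨⟨⟨hk1, hk2⟩, hl1, hl2⟩, hkl, hodd⟩, hE⟩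
      exact ⟨(l' - k - 1) / 2, by omega, by omega, by omega⟩
    · rintro ⟨j, hj, rfl, rfl⟩
      refine ⟨⟨⟨⟨by omega, by omega⟩, by omega, by omega⟩, by omega, by omega⟩, rfl⟩
  rw [this, Finset.card_image_of_injOn, Finset.card_range]
  intro a ha b hb hab
  simp at ha hb
  simp only [Prod.mk.injEq] at hab
  omega

lemma cardP (m : ℕ) :
    4 * ((Finset.Ioc 0 m ×ˢ Finset.Ioc 0 m).filter
        (fun p : ℕ × ℕ => p.1 < p.2 ∧ Odd (p.2 - p.1))).card + m % 2 = m ^ 2 := by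
  have h := Finset.card_eq_sum_card_fiberwise (s := (Finset.Ioc 0 m ×ˢ Finset.Ioc 0 m).filter
        (fun p : ℕ × ℕ => p.1 < p.2 ∧ Odd (p.2 - p.1))) (t := Finset.Ioc 0 m)
        (f := Prod.snd) ?_
  · rw [h]
    rw [Finset.sum_congr rfl (fun l hl => by
      simp only [Finset.mem_Ioc] at hl
      exact fiber_eq m l hl.1 hl.2)]
    exact sum_halves m
  · rintro ⟨k, l⟩ hp
    simp only [Finset.mem_coe, Finset.mem_filter, Finset.mem_product] at hp
    exact hp.1.2

/-- the basis vector e_n -/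
noncomputable def eVec (n : ℕ) : Fin n → ℝ := fun i => if (i : ℕ) + 1 = n then 1 else 0

lemma yVec_top (n k : ℕ) (hk : 1 ≤ k) (hkn : k < n) : yVec n k n = eVec n := by
  funext i
  simp only [yVec, eVec]
  rcases eq_or_ne ((i : ℕ) + 1) k with h1 | h1
  · rw [if_pos h1, if_neg (by omega), Nat.sub_self, Nat.fib_zero]
    simp
  · rw [if_neg h1]
    rcases eq_or_ne ((i : ℕ) + 1) n with h2 | h2
    · rw [if_pos h2, if_pos h2]
      have : (0 : ℝ) < Nat.fib (n - k) := by
        exact_mod_cast Nat.fib_pos.mpr (by omega)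
      field_simp
    · rw [if_neg h2, if_neg h2]

lemma yVec_pos_k (n k l : ℕ) (hk : 1 ≤ k) (hkl : k < l) (hln : l < n) (hodd : Odd (l - k)) :
    0 < yVec n k l ⟨k - 1, by omega⟩ := by
  have hc : ((⟨k - 1, by omega⟩ : Fin n) : ℕ) + 1 = k := by simp; omega
  simp only [yVec, hc, if_true, if_pos rfl]
  have h1 : (-1 : ℝ) ^ (l - k + 1) = 1 := (hodd.add_one).neg_one_pow
  rw [h1, one_mul]
  have h2 : (0 : ℝ) < Nat.fib (n - l) := by exact_mod_cast Nat.fib_pos.mpr (by omega)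
  have h3 : (0 : ℝ) < Nat.fib (l - k) := by exact_mod_cast Nat.fib_pos.mpr (by omega)
  exact div_pos h2 h3

lemma yVec_pos_l (n k l : ℕ) (hk : 1 ≤ k) (hkl : k < l) (hln : l ≤ n) :
    0 < yVec n k l ⟨l - 1, by omega⟩ := by
  have hc : ((⟨l - 1, by omega⟩ : Fin n) : ℕ) + 1 = l := by simp; omega
  simp only [yVec, hc]
  rw [if_neg (by omega)]
  simp only [if_true]
  have h2 : (0 : ℝ) < Nat.fib (n - k) := by exact_mod_cast Nat.fib_pos.mpr (by omega)
  have h3 : (0 : ℝ) < Nat.fib (l - k) := by exact_mod_cast Nat.fib_pos.mpr (by omega)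
  positivity

lemma yVec_zero (n k l : ℕ) (i : Fin n) (h1 : (i : ℕ) + 1 ≠ k) (h2 : (i : ℕ) + 1 ≠ l) :
    yVec n k l i = 0 := by
  simp only [yVec, if_neg h1, if_neg h2]

lemma yVec_inj (n k l k' l' : ℕ) (hk : 1 ≤ k) (hkl : k < l) (hln : l < n) (hodd : Odd (l - k))
    (hk' : 1 ≤ k') (hkl' : k' < l') (hln' : l' < n) (hodd' : Odd (l' - k'))
    (heq : yVec n k l = yVec n k' l') : k = k' ∧ l = l' := by
  have H1 : k = k' ∨ k = l' := by
    by_contra h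
    push_neg at h
    have := yVec_pos_k n k l hk hkl hln hodd
    rw [heq] at this
    rw [yVec_zero n k' l' _ (by simp; omega) (by simp; omega)] at this
    exact lt_irrefl 0 this
  have H2 : l = k' ∨ l = l' := by
    by_contra h
    push_neg at h
    have := yVec_pos_l n k l hk hkl (le_of_lt hln)
    rw [heq] at this
    rw [yVec_zero n k' l' _ (by simp; omega) (by simp; omega)] at this
    exact lt_irrefl 0 this
  have H3 : k' = k ∨ k' = l := by
    by_contra h
    push_neg at h
    have := yVec_pos_k n k' l' hk' hkl' hln' hodd'
    rw [← heq] at this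
    rw [yVec_zero n k l _ (by simp; omega) (by simp; omega)] at this
    exact lt_irrefl 0 this
  omega

lemma yVec_ne_eVec (n k l : ℕ) (hk : 1 ≤ k) (hkl : k < l) (hln : l < n) (hodd : Odd (l - k)) :
    yVec n k l ≠ eVec n := by
  intro h
  have := yVec_pos_k n k l hk hkl hln hodd
  rw [h] at this
  have hz : eVec n (⟨k - 1, by omega⟩ : Fin n) = 0 := by
    unfold eVec
    rw [if_neg (by simp; omega)]
  rw [hz] at this
  exact lt_irrefl 0 this

/-- For every integer n ≥ 3, #F_n^+ = (n² − 2n + 5)/4 if n is odd and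
(n² − 2n + 4)/4 if n is even. -/
theorem stmt16 (n : ℕ) (hn : 3 ≤ n) :
    (Odd n → 4 * (FplusSet n).ncard = n ^ 2 - 2 * n + 5)
    ∧ (Even n → 4 * (FplusSet n).ncard = n ^ 2 - 2 * n + 4) := by
  classical
  set φ : ℕ × ℕ → (Fin n → ℝ) := fun p => yVec n p.1 p.2 with hφ
  set P : Finset (ℕ × ℕ) := (Finset.Ioc 0 n ×ˢ Finset.Ioc 0 n).filter
      (fun p : ℕ × ℕ => p.1 < p.2 ∧ Odd (p.2 - p.1)) with hP
  have hset : FplusSet n = ↑(P.image φ) := by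
    ext v
    simp only [FplusSet, Set.mem_setOf_eq, Finset.coe_image, Set.mem_image, Finset.mem_coe,
      hP, Finset.mem_filter, Finset.mem_product, Finset.mem_Ioc]
    constructor
    · rintro ⟨k, l, hk, hkl, hln, hodd, rfl⟩
      exact ⟨(k, l), ⟨⟨⟨by omega, by omega⟩, by omega, by omega⟩, hkl, hodd⟩, rfl⟩
    · rintro ⟨⟨k, l⟩, ⟨⟨⟨hk1, hk2⟩, hl1, hl2⟩, hkl, hodd⟩, rfl⟩
      exact ⟨k, l, by omega, hkl, by omega, hodd, rfl⟩
  set A : Finset (ℕ × ℕ) := P.filter (fun p => p.2 ≠ n) with hA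
  set B : Finset (ℕ × ℕ) := P.filter (fun p => p.2 = n) with hB
  have hPAB : P = B ∪ A := (Finset.filter_union_filter_not_eq (fun p => p.2 = n) P).symm
  have hBmem : (n - 1, n) ∈ B := by
    simp only [hB, hP, Finset.mem_filter, Finset.mem_product, Finset.mem_Ioc]
    refine ⟨⟨⟨⟨by omega, by omega⟩, by omega, by omega⟩, by omega, ?_⟩, trivial⟩
    have : n - (n - 1) = 1 := by omega
    rw [this]; exact odd_one
  have hBim : B.image φ = {eVec n} := by
    rw [Finset.image_congr (g := fun _ => eVec n), Finset.image_const ⟨_, hBmem⟩]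
    rintro ⟨k, l⟩ hp
    simp only [hB, hP, Finset.mem_coe, Finset.mem_filter, Finset.mem_product,
      Finset.mem_Ioc] at hp
    obtain ⟨⟨⟨⟨hk1, hk2⟩, hl1, hl2⟩, hkl, hodd⟩, hl⟩ := hp
    rw [hl]
    exact yVec_top n k (by omega) (by omega)
  have hAmem : ∀ p ∈ A, 1 ≤ p.1 ∧ p.1 < p.2 ∧ p.2 < n ∧ Odd (p.2 - p.1) := by
    rintro ⟨k, l⟩ hp
    simp only [hA, hP, Finset.mem_filter, Finset.mem_product, Finset.mem_Ioc] at hp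
    obtain ⟨⟨⟨⟨hk1, hk2⟩, hl1, hl2⟩, hkl, hodd⟩, hl⟩ := hp
    exact ⟨by omega, hkl, by omega, hodd⟩
  have hinj : Set.InjOn φ ↑A := by
    rintro ⟨k, l⟩ hp ⟨k', l'⟩ hq heq
    obtain ⟨h1, h2, h3, h4⟩ := hAmem _ (by simpa using hp)
    obtain ⟨h1', h2', h3', h4'⟩ := hAmem _ (by simpa using hq)
    obtain ⟨e1, e2⟩ := yVec_inj n k l k' l' h1 h2 h3 h4 h1' h2' h3' h4' heq
    simp [e1, e2]
  have hnotmem : eVec n ∉ A.image φ := by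
    rw [Finset.mem_image]
    rintro ⟨p, hp, hfp⟩
    obtain ⟨h1, h2, h3, h4⟩ := hAmem p hp
    exact yVec_ne_eVec n p.1 p.2 h1 h2 h3 h4 hfp
  have hcard : (P.image φ).card = A.card + 1 := by
    rw [hPAB, Finset.image_union, hBim]
    rw [Finset.card_union_of_disjoint (by simpa using hnotmem)]
    rw [Finset.card_image_of_injOn hinj, Finset.card_singleton, add_comm]
  have hAeq : A = (Finset.Ioc 0 (n - 1) ×ˢ Finset.Ioc 0 (n - 1)).filter
      (fun p : ℕ × ℕ => p.1 < p.2 ∧ Odd (p.2 - p.1)) := by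
    ext ⟨k, l⟩
    simp only [hA, hP, Finset.mem_filter, Finset.mem_product, Finset.mem_Ioc]
    constructor
    · rintro ⟨⟨⟨⟨hk1, hk2⟩, hl1, hl2⟩, hkl, hodd⟩, hl⟩
      exact ⟨⟨⟨by omega, by omega⟩, by omega, by omega⟩, hkl, hodd⟩
    · rintro ⟨⟨⟨hk1, hk2⟩, hl1, hl2⟩, hkl, hodd⟩
      exact ⟨⟨⟨⟨by omega, by omega⟩, by omega, by omega⟩, hkl, hodd⟩, by omega⟩
  have hcount := cardP (n - 1)
  rw [← hAeq] at hcount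
  have hncard : (FplusSet n).ncard = A.card + 1 := by
    rw [hset, Set.ncard_coe_finset, hcard]
  have hsq : n ^ 2 = (n - 1) ^ 2 + 2 * (n - 1) + 1 := by
    have h1 : n - 1 + 1 = n := by omega
    calc n ^ 2 = (n - 1 + 1) ^ 2 := by rw [h1]
    _ = (n - 1) ^ 2 + 2 * (n - 1) + 1 := by ring
  obtain ⟨q, hq⟩ : ∃ q, (n - 1) ^ 2 = q := ⟨_, rfl⟩
  rw [hq] at hcount hsq
  have hq4 : 4 ≤ q := by
    have h : 2 * 2 ≤ (n - 1) * (n - 1) := Nat.mul_le_mul (by omega) (by omega)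
    have h2 : (n - 1) ^ 2 = (n - 1) * (n - 1) := pow_two _
    omega
  constructor <;> intro hpar
  · rw [Nat.odd_iff] at hpar
    rw [hncard, hsq]
    clear hq
    omega
  · rw [Nat.even_iff] at hpar
    rw [hncard, hsq]
    clear hq
    omega
end
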